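/- Let H be a separable infinite-dimensional real Hilbert space with orthonormal basis (e_i), D = {±e_i}, and t ∈ (0,1). There exist f ∈ H and a sequence of positive coefficients (c_n) with c_n → 0 and ∑ c_n = ∞ such that some realization of the greedy expansion of f with respect to D with prescribed coefficients (c_n) and weakening parameter t does not converge to f; in fact limsup_{n→∞} ‖f_n‖ ≥ 1. -/

import Mathlib

namespace S9

/-- block length -/
def kk (j : ℕ) : ℕ := (j+1)^2
/-- coordinate offset of block j -/
def OO (j : ℕ) : ℕ := ∑ i ∈ Finset.range j, kk i
/-- step offset of block j -/
def TT (j : ℕ) : ℕ := ∑ i ∈ Finset.range j, (i+2) * kk i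

lemma kk_pos (j : ℕ) : 0 < kk j := by unfold kk; positivity

lemma OO_succ (j : ℕ) : OO (j+1) = OO j + kk j := Finset.sum_range_succ _ _
lemma TT_succ (j : ℕ) : TT (j+1) = TT j + (j+2) * kk j := Finset.sum_range_succ _ _

lemma OO_strictMono : StrictMono OO := strictMono_nat_of_lt_succ (fun n => by
  rw [OO_succ]; exact Nat.lt_add_of_pos_right (kk_pos n))

lemma TT_strictMono : StrictMono TT := strictMono_nat_of_lt_succ (fun n => by
  rw [TT_succ]; exact Nat.lt_add_of_pos_right (by have := kk_pos n; positivity))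

lemma blk_ex (i : ℕ) : ∃ j, i < OO (j+1) :=
  ⟨i, lt_of_lt_of_le (Nat.lt_succ_self i) (OO_strictMono.le_apply)⟩

lemma J_ex (m : ℕ) : ∃ j, m < TT (j+1) :=
  ⟨m, lt_of_lt_of_le (Nat.lt_succ_self m) (TT_strictMono.le_apply)⟩

def blk (i : ℕ) : ℕ := Nat.find (blk_ex i)
def JJ (m : ℕ) : ℕ := Nat.find (J_ex m)

lemma blk_lt (i : ℕ) : i < OO (blk i + 1) := Nat.find_spec (blk_ex i)
lemma JJ_lt (m : ℕ) : m < TT (JJ m + 1) := Nat.find_spec (J_ex m)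

lemma blk_le (i : ℕ) : OO (blk i) ≤ i := by
  rcases Nat.eq_zero_or_pos (blk i) with h | h
  · simp [h, OO]
  · by_contra hc
    push_neg at hc
    have h2 : blk i - 1 < blk i := by omega
    have := Nat.find_min (blk_ex i) (show blk i - 1 < Nat.find (blk_ex i) from h2)
    rw [show blk i - 1 + 1 = blk i from by omega] at this
    exact this hc

lemma JJ_le (m : ℕ) : TT (JJ m) ≤ m := by
  rcases Nat.eq_zero_or_pos (JJ m) with h | h
  · simp [h, TT]
  · by_contra hc
    push_neg at hc
    have h2 : JJ m - 1 < JJ m := by omega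
    have := Nat.find_min (J_ex m) (show JJ m - 1 < Nat.find (J_ex m) from h2)
    rw [show JJ m - 1 + 1 = JJ m from by omega] at this
    exact this hc

lemma blk_eq {j q : ℕ} (hq : q < kk j) : blk (OO j + q) = j := by
  rw [blk, Nat.find_eq_iff]
  constructor
  · rw [OO_succ]; omega
  · intro j' hj'
    push_neg
    calc OO (j'+1) ≤ OO j := OO_strictMono.monotone (by omega)
    _ ≤ OO j + q := by omega

lemma JJ_eq {j d : ℕ} (hd : d < (j+2) * kk j) : JJ (TT j + d) = j := by
  rw [JJ, Nat.find_eq_iff]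
  constructor
  · rw [TT_succ]; omega
  · intro j' hj'
    push_neg
    calc TT (j'+1) ≤ TT j := TT_strictMono.monotone (by omega)
    _ ≤ TT j + d := by omega

def PP (m : ℕ) : ℕ := (m - TT (JJ m)) / kk (JJ m)
def QQ (m : ℕ) : ℕ := (m - TT (JJ m)) % kk (JJ m)

lemma QQ_lt (m : ℕ) : QQ m < kk (JJ m) := Nat.mod_lt _ (kk_pos _)

lemma m_decomp (m : ℕ) : m = TT (JJ m) + (PP m * kk (JJ m) + QQ m) := by
  have h1 := JJ_le m
  have h2 : PP m * kk (JJ m) + QQ m = m - TT (JJ m) := by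
    rw [PP, QQ, mul_comm]; exact Nat.div_add_mod _ _
  omega

lemma PP_lt (m : ℕ) : PP m < JJ m + 2 := by
  have h1 := JJ_le m
  have h2 := JJ_lt m
  rw [TT_succ] at h2
  rw [PP, Nat.div_lt_iff_lt_mul (kk_pos _)]
  omega

lemma PP_QQ_eq {j d : ℕ} (hd : d < (j+2) * kk j) :
    PP (TT j + d) = d / kk j ∧ QQ (TT j + d) = d % kk j := by
  have hJ := JJ_eq hd
  constructor
  · rw [PP, hJ]; congr 1; omega
  · rw [QQ, hJ]; congr 1; omega

lemma step_trans (m : ℕ) :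
    (QQ (m+1) = QQ m + 1 ∧ PP (m+1) = PP m ∧ JJ (m+1) = JJ m) ∨
    (QQ m + 1 = kk (JJ m) ∧ PP m + 1 < JJ m + 2 ∧ QQ (m+1) = 0 ∧ PP (m+1) = PP m + 1 ∧ JJ (m+1) = JJ m) ∨
    (QQ m + 1 = kk (JJ m) ∧ PP m = JJ m + 1 ∧ QQ (m+1) = 0 ∧ PP (m+1) = 0 ∧
      JJ (m+1) = JJ m + 1 ∧ m + 1 = TT (JJ m + 1)) := by
  set j := JJ m with hj
  set P := PP m with hPdef; set Q := QQ m with hQdef; set K := kk j with hKdef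
  have hK : 0 < K := kk_pos j
  have hQ : Q < K := QQ_lt m
  have hP : P < j + 2 := PP_lt m
  have hdec : m = TT j + (P * K + Q) := m_decomp m
  by_cases hQ1 : Q + 1 < K
  · left
    have hd : P * K + Q + 1 < (j+2) * K := by
      have h1 : (P+1) * K ≤ (j+2)*K := Nat.mul_le_mul_right K (by omega)
      have h2 : (P+1) * K = P * K + K := by ring
      omega
    have h := PP_QQ_eq (j := j) (d := P * K + Q + 1) hd
    have hJ := JJ_eq (j := j) (d := P * K + Q + 1) hd
    have hm1 : m + 1 = TT j + (P * K + Q + 1) := by omega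
    rw [← hm1] at h hJ
    have hdiv : (P * K + Q + 1) / K = P := by
      rw [show P * K + Q + 1 = (Q+1) + P * K by ring, Nat.add_mul_div_right _ _ hK,
        Nat.div_eq_of_lt hQ1, Nat.zero_add]
    have hmod : (P * K + Q + 1) % K = Q + 1 := by
      rw [show P * K + Q + 1 = (Q+1) + P * K by ring, Nat.add_mul_mod_self_right,
        Nat.mod_eq_of_lt hQ1]
    exact ⟨by rw [h.2, hmod], by rw [h.1, hdiv], hJ⟩
  · have hQK : Q + 1 = K := by omega
    by_cases hP1 : P + 1 < j + 2
    · right; left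
      have he : P * K + Q + 1 = (P+1) * K := by
        have : (P+1) * K = P * K + K := by ring
        omega
      have hd : P * K + Q + 1 < (j+2) * K := by
        rw [he]; exact Nat.mul_lt_mul_of_pos_right hP1 hK
      have h := PP_QQ_eq (j := j) (d := P * K + Q + 1) hd
      have hJ := JJ_eq (j := j) (d := P * K + Q + 1) hd
      have hm1 : m + 1 = TT j + (P * K + Q + 1) := by omega
      rw [← hm1] at h hJ
      have hdiv : (P * K + Q + 1) / K = P + 1 := by rw [he]; exact Nat.mul_div_cancel _ hK
      have hmod : (P * K + Q + 1) % K = 0 := by rw [he]; exact Nat.mul_mod_left _ _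
      exact ⟨hQK, hP1, by rw [h.2, hmod], by rw [h.1, hdiv], hJ⟩
    · right; right
      have hPj : P = j + 1 := by omega
      have hm1 : m + 1 = TT (j+1) := by
        rw [TT_succ]
        have hkk : (j+2) * kk j = (j+2) * K := by rw [hKdef]
        have : P * K + Q + 1 = (j+2) * K := by
          rw [hPj]
          have : (j+2) * K = (j+1) * K + K := by ring
          omega
        omega
      have hd0 : 0 < (j+1+2) * kk (j+1) := by
        have := kk_pos (j+1); positivity
      have h := PP_QQ_eq (j := j+1) (d := 0) hd0
      have hJ := JJ_eq (j := j+1) (d := 0) hd0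
      rw [add_zero] at h hJ
      rw [← hm1] at h hJ
      refine ⟨hQK, hPj, by simp [h.2], by simp [h.1], hJ, hm1⟩

lemma TT_zero : TT 0 = 0 := by simp [TT]
lemma OO_zero : OO 0 = 0 := by simp [OO]

lemma blk_ge {i J : ℕ} (h : OO J ≤ i) : J ≤ blk i := by
  have h2 := blk_lt i
  by_contra hc
  push_neg at hc
  have h3 : OO (blk i + 1) ≤ OO J := OO_strictMono.monotone (by omega)
  omega
noncomputable def sv (t : ℝ) (j : ℕ) : ℝ := t^(j+1) / (j+1)
noncomputable def vv (t : ℝ) (j p : ℕ) : ℝ :=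
  if j + 2 ≤ p then 0 else (-1:ℝ)^p * (t^(j+1) * t⁻¹^p / (j+1))
noncomputable def cc (t : ℝ) (m : ℕ) : ℝ :=
  (if PP m ≤ JJ m then 1 + t⁻¹ else 1) * (t^(JJ m+1) * t⁻¹^(PP m) / (JJ m+1))
noncomputable def xx (t : ℝ) (m i : ℕ) : ℝ :=
  if m < TT (blk i) then sv t (blk i)
  else if TT (blk i + 1) ≤ m then 0
  else vv t (blk i) (PP m + if i - OO (blk i) < QQ m then 1 else 0)

lemma vv_zero (t : ℝ) (j : ℕ) : vv t j 0 = sv t j := by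
  simp [vv, sv]

lemma vv_dead (t : ℝ) {j p : ℕ} (h : j + 2 ≤ p) : vv t j p = 0 := if_pos h

lemma vstep {t : ℝ} {j p : ℕ} (hp : p ≤ j + 1) :
    vv t j p - (-1:ℝ)^p * ((if p ≤ j then 1 + t⁻¹ else 1) * (t^(j+1) * t⁻¹^p / (j+1)))
      = vv t j (p+1) := by
  by_cases hpj : p ≤ j
  · have h1 : ¬ (j + 2 ≤ p) := by omega
    have h2 : ¬ (j + 2 ≤ p + 1) := by omega
    rw [vv, vv, if_neg h1, if_neg h2, if_pos hpj, pow_succ, pow_succ]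
    ring
  · have hpe : p = j + 1 := by omega
    subst hpe
    have h1 : ¬ (j + 2 ≤ j + 1) := by omega
    have h2 : j + 2 ≤ j + 1 + 1 := by omega
    rw [vv, vv, if_neg h1, if_pos h2, if_neg hpj]
    ring

lemma xx_of_dead (t : ℝ) {m i : ℕ} (h : TT (blk i + 1) ≤ m) : xx t m i = 0 := by
  have h2 : TT (blk i) ≤ TT (blk i + 1) := TT_strictMono.monotone (Nat.le_succ _)
  rw [xx, if_neg (by omega), if_pos h]

lemma xx_of_fresh (t : ℝ) {m i : ℕ} (h : m < TT (blk i)) : xx t m i = sv t (blk i) :=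
  if_pos h

lemma xx_of_active (t : ℝ) {m i : ℕ} (h1 : TT (blk i) ≤ m) (h2 : m < TT (blk i + 1)) :
    xx t m i = vv t (blk i) (PP m + if i - OO (blk i) < QQ m then 1 else 0) := by
  rw [xx, if_neg (by omega), if_neg (by omega)]

lemma xstep (t : ℝ) (m i : ℕ) :
    xx t (m+1) i = xx t m i - (if i = OO (JJ m) + QQ m then (-1:ℝ)^(PP m) * cc t m else 0) := by
  have hTl : TT (JJ m) ≤ m := JJ_le m
  have hTu : m < TT (JJ m + 1) := JJ_lt m
  have hQm : QQ m < kk (JJ m) := QQ_lt m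
  have hPm : PP m < JJ m + 2 := PP_lt m
  rcases lt_trichotomy (blk i) (JJ m) with hc | hc | hc
  · -- dead block
    have h1 : TT (blk i + 1) ≤ m := le_trans (TT_strictMono.monotone (by omega)) hTl
    have hne : i ≠ OO (JJ m) + QQ m := by
      have h2 : i < OO (blk i + 1) := blk_lt i
      have h3 : OO (blk i + 1) ≤ OO (JJ m) := OO_strictMono.monotone (by omega)
      omega
    rw [if_neg hne, sub_zero, xx_of_dead t h1, xx_of_dead t (by omega)]
  · -- current block
    have hbl : OO (blk i) ≤ i := blk_le i
    have hbu : i < OO (blk i + 1) := blk_lt i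
    rw [OO_succ] at hbu
    have e1 : TT (blk i) = TT (JJ m) := by rw [hc]
    have e2 : TT (blk i + 1) = TT (JJ m + 1) := by rw [hc]
    have e3 : OO (blk i) = OO (JJ m) := by rw [hc]
    have e4 : kk (blk i) = kk (JJ m) := by rw [hc]
    have hiff : (i = OO (JJ m) + QQ m) ↔ (i - OO (blk i) = QQ m) := by
      rw [hc]; omega
    have hxm : xx t m i = vv t (blk i) (PP m + if i - OO (blk i) < QQ m then 1 else 0) :=
      xx_of_active t (by omega) (by omega)
    rcases step_trans m with ⟨hQ', hP', hJ'⟩ | ⟨hQK, hPlt, hQ', hP', hJ'⟩ |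
      ⟨hQK, hPe, hQ', hP', hJ', hm1⟩
    · -- same pass
      have hl1 : TT (JJ (m+1)) ≤ m + 1 := JJ_le (m+1)
      have hu1 : m + 1 < TT (JJ (m+1) + 1) := JJ_lt (m+1)
      rw [hJ'] at hl1 hu1
      have hxm1 : xx t (m+1) i
          = vv t (blk i) (PP (m+1) + if i - OO (blk i) < QQ (m+1) then 1 else 0) :=
        xx_of_active t (by omega) (by omega)
      rw [hxm1, hxm, hP', hQ']
      by_cases hiq : i - OO (blk i) = QQ m
      · rw [if_pos (hiff.mpr hiq), if_pos (by omega), if_neg (by omega), add_zero, hc, cc]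
        linarith [vstep (t := t) (j := JJ m) (p := PP m) (by omega)]
      · rw [if_neg (fun h => hiq (hiff.mp h)), sub_zero]
        congr 2
        split_ifs with h1 h2 <;> omega
    · -- pass rollover
      have hl1 : TT (JJ (m+1)) ≤ m + 1 := JJ_le (m+1)
      have hu1 : m + 1 < TT (JJ (m+1) + 1) := JJ_lt (m+1)
      rw [hJ'] at hl1 hu1
      have hxm1 : xx t (m+1) i
          = vv t (blk i) (PP (m+1) + if i - OO (blk i) < QQ (m+1) then 1 else 0) :=
        xx_of_active t (by omega) (by omega)
      rw [hxm1, hxm, hP', hQ', if_neg (by omega), add_zero]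
      by_cases hiq : i - OO (blk i) = QQ m
      · rw [if_pos (hiff.mpr hiq), if_neg (by omega), add_zero, hc, cc]
        linarith [vstep (t := t) (j := JJ m) (p := PP m) (by omega)]
      · rw [if_neg (fun h => hiq (hiff.mp h)), sub_zero, if_pos (by omega)]
    · -- block rollover
      have hxm1 : xx t (m+1) i = 0 := xx_of_dead t (by rw [hc]; omega)
      rw [hxm1, hxm]
      by_cases hiq : i - OO (blk i) = QQ m
      · rw [if_pos (hiff.mpr hiq), if_neg (by omega), add_zero, hc, cc]
        have h0 : vv t (JJ m) (PP m + 1) = 0 := vv_dead t (by omega)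
        linarith [vstep (t := t) (j := JJ m) (p := PP m) (by omega), h0]
      · rw [if_neg (fun h => hiq (hiff.mp h)), sub_zero, if_pos (by omega), hPe]
        exact (vv_dead t (by omega)).symm
  · -- future block
    have hfr : m < TT (blk i) := lt_of_lt_of_le hTu (TT_strictMono.monotone (by omega))
    have hne : i ≠ OO (JJ m) + QQ m := by
      have h3 : OO (JJ m + 1) ≤ OO (blk i) := OO_strictMono.monotone (by omega)
      have h4 : OO (blk i) ≤ i := blk_le i
      rw [OO_succ] at h3
      omega
    rw [if_neg hne, sub_zero, xx_of_fresh t hfr]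
    rcases step_trans m with ⟨hQ', hP', hJ'⟩ | ⟨hQK, hPlt, hQ', hP', hJ'⟩ |
      ⟨hQK, hPe, hQ', hP', hJ', hm1⟩
    · have hu1 : m + 1 < TT (JJ (m+1) + 1) := JJ_lt (m+1)
      rw [hJ'] at hu1
      exact xx_of_fresh t (lt_of_lt_of_le hu1 (TT_strictMono.monotone (by omega)))
    · have hu1 : m + 1 < TT (JJ (m+1) + 1) := JJ_lt (m+1)
      rw [hJ'] at hu1
      exact xx_of_fresh t (lt_of_lt_of_le hu1 (TT_strictMono.monotone (by omega)))
    · rcases Nat.lt_or_ge (JJ m + 1) (blk i) with hbi | hbi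
      · exact xx_of_fresh t (by rw [hm1] at *; exact TT_strictMono hbi)
      · have hbe : blk i = JJ m + 1 := by omega
        have hxm1 : xx t (m+1) i
            = vv t (blk i) (PP (m+1) + if i - OO (blk i) < QQ (m+1) then 1 else 0) :=
          xx_of_active t (by rw [hbe, ← hm1]) (by rw [hbe, ← hJ']; exact JJ_lt (m+1))
        rw [hxm1, hP', hQ', if_neg (by omega), add_zero, vv_zero, hbe]

lemma t_inv_one {t : ℝ} (h0 : 0 < t) (h1 : t < 1) : (1:ℝ) ≤ t⁻¹ :=
  one_le_inv_iff₀.mpr ⟨h0, h1.le⟩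

lemma t_cancel {t : ℝ} (h0 : 0 < t) (n : ℕ) : t^n * t⁻¹^n = 1 := by
  rw [← mul_pow, mul_inv_cancel₀ (ne_of_gt h0), one_pow]

lemma sv_pos {t : ℝ} (h0 : 0 < t) (j : ℕ) : 0 < sv t j := by
  rw [sv]; positivity

lemma sv_anti {t : ℝ} (h0 : 0 < t) (h1 : t < 1) {j j' : ℕ} (h : j ≤ j') : sv t j' ≤ sv t j := by
  rw [sv, sv]
  apply div_le_div₀ (by positivity) (pow_le_pow_of_le_one h0.le h1.le (by omega)) (by positivity)
  have : (j:ℝ) ≤ (j':ℝ) := Nat.cast_le.mpr h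
  linarith

lemma vv_live (t : ℝ) {j p : ℕ} (hp : p ≤ j + 1) :
    vv t j p = (-1:ℝ)^p * (t^(j+1) * t⁻¹^p / (j+1)) := if_neg (by omega)

lemma vv_abs {t : ℝ} (h0 : 0 < t) (j p : ℕ) : |vv t j p| ≤ t^(j+1) * t⁻¹^p / (j+1) := by
  rw [vv]
  split_ifs with h
  · simp; positivity
  · rw [abs_mul, abs_pow, abs_neg, abs_one, one_pow, one_mul, abs_of_nonneg (by positivity)]

lemma vv_abs_one {t : ℝ} (h0 : 0 < t) (h1 : t < 1) (j p : ℕ) : |vv t j p| ≤ 1 / (j+1) := by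
  rcases Nat.lt_or_ge (j+1) p with hp | hp
  · rw [vv_dead t (by omega)]
    simp
    positivity
  · refine le_trans (vv_abs h0 j p) ?_
    calc t^(j+1) * t⁻¹^p / (j+1) ≤ t^(j+1) * t⁻¹^(j+1) / (j+1) := by
          apply div_le_div₀ (by positivity) ?_ (by positivity) le_rfl
          exact mul_le_mul_of_nonneg_left (pow_le_pow_right₀ (t_inv_one h0 h1) hp)
            (by positivity)
    _ = 1 / (j+1) := by rw [t_cancel h0]

lemma xx_abs {t : ℝ} (h0 : 0 < t) (h1 : t < 1) (m i : ℕ) :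
    |xx t m i| ≤ t^(JJ m + 1) * t⁻¹^(PP m + 1) / (JJ m + 1) := by
  have hTl : TT (JJ m) ≤ m := JJ_le m
  have hTu : m < TT (JJ m + 1) := JJ_lt m
  have hB : (0:ℝ) < t^(JJ m + 1) * t⁻¹^(PP m + 1) / (JJ m + 1) := by positivity
  rcases lt_trichotomy (blk i) (JJ m) with hc | hc | hc
  · rw [xx_of_dead t (le_trans (TT_strictMono.monotone (by omega)) hTl)]
    simpa using hB.le
  · rw [xx_of_active t (by rw [hc]; omega) (by rw [hc]; omega), hc]
    refine le_trans (vv_abs h0 _ _) ?_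
    apply div_le_div₀ (by positivity) ?_ (by positivity) le_rfl
    refine mul_le_mul_of_nonneg_left (pow_le_pow_right₀ (t_inv_one h0 h1) ?_) (by positivity)
    split_ifs <;> omega
  · rw [xx_of_fresh t (lt_of_lt_of_le hTu (TT_strictMono.monotone (by omega))),
      abs_of_nonneg (sv_pos h0 _).le]
    calc sv t (blk i) ≤ sv t (JJ m) := sv_anti h0 h1 (by omega)
    _ = t^(JJ m + 1) * 1 / (JJ m + 1) := by rw [sv, mul_one]
    _ ≤ _ := by
        apply div_le_div₀ (by positivity) ?_ (by positivity) le_rfl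
        exact mul_le_mul_of_nonneg_left (one_le_pow₀ (t_inv_one h0 h1)) (by positivity)

lemma xx_self (t : ℝ) (m : ℕ) : xx t m (OO (JJ m) + QQ m) = vv t (JJ m) (PP m) := by
  have hb : blk (OO (JJ m) + QQ m) = JJ m := blk_eq (QQ_lt m)
  rw [xx_of_active t (by rw [hb]; exact JJ_le m) (by rw [hb]; exact JJ_lt m), hb,
    if_neg (by omega), add_zero]

lemma xx_zero (t : ℝ) (i : ℕ) : xx t 0 i = sv t (blk i) := by
  rcases Nat.eq_zero_or_pos (TT (blk i)) with h | h
  · have hb0 : blk i = 0 := by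
      have h2 : blk i ≤ TT (blk i) := TT_strictMono.le_apply
      omega
    have hd : (0:ℕ) < (0+2) * kk 0 := by have := kk_pos 0; omega
    have hJ : JJ 0 = 0 := by have h3 := JJ_eq hd; rwa [TT_zero, add_zero] at h3
    have hPQ := PP_QQ_eq hd
    rw [TT_zero, add_zero, Nat.zero_div, Nat.zero_mod] at hPQ
    have hu : 0 < TT (blk i + 1) := by
      have h3 := JJ_lt 0
      rw [hJ] at h3
      rw [hb0]
      exact h3
    rw [xx_of_active t (by omega) hu, hb0, hPQ.1, hPQ.2, if_neg (by omega), add_zero, vv_zero]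
  · exact xx_of_fresh t h

lemma cc_pos {t : ℝ} (h0 : 0 < t) (m : ℕ) : 0 < cc t m := by
  have h2 : (0:ℝ) < t⁻¹ := inv_pos.mpr h0
  rw [cc]
  apply mul_pos
  · split_ifs <;> linarith
  · positivity

lemma cc_le {t : ℝ} (h0 : 0 < t) (h1 : t < 1) (m : ℕ) : cc t m ≤ 2 / (JJ m + 1) := by
  have hti := t_inv_one h0 h1
  rw [cc]
  split_ifs with hPj
  · have key : t^(JJ m+1) * t⁻¹^(PP m) ≤ t := by
      calc t^(JJ m+1)*t⁻¹^(PP m) ≤ t^(JJ m+1) * t⁻¹^(JJ m) :=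
            mul_le_mul_of_nonneg_left (pow_le_pow_right₀ hti hPj) (by positivity)
      _ = t * (t^(JJ m) * t⁻¹^(JJ m)) := by ring
      _ = t := by rw [t_cancel h0, mul_one]
    have hA : (1+t⁻¹) * (t^(JJ m+1) * t⁻¹^(PP m)) ≤ 2 := by
      have h3 : (1+t⁻¹) * t = t + 1 := by
        rw [add_mul, one_mul, inv_mul_cancel₀ (ne_of_gt h0)]
      have h4 : (1+t⁻¹) * (t^(JJ m+1) * t⁻¹^(PP m)) ≤ (1+t⁻¹) * t :=
        mul_le_mul_of_nonneg_left key (by linarith)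
      linarith
    calc (1+t⁻¹) * (t^(JJ m+1)*t⁻¹^(PP m)/(JJ m+1))
        = ((1+t⁻¹) * (t^(JJ m+1)*t⁻¹^(PP m)))/(JJ m+1) := by ring
    _ ≤ 2/(JJ m+1) := div_le_div₀ (by norm_num) hA (by positivity) le_rfl
  · have hPe : PP m = JJ m + 1 := by have := PP_lt m; omega
    rw [hPe, one_mul, t_cancel h0]
    exact div_le_div₀ (by norm_num) (by norm_num) (by positivity) le_rfl

lemma JJ_ge {j m : ℕ} (h : TT j ≤ m) : j ≤ JJ m := by
  by_contra hc
  push_neg at hc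
  have h1 := JJ_lt m
  have h2 : TT (JJ m + 1) ≤ TT j := TT_strictMono.monotone (by omega)
  omega

lemma JJ_tendsto : Filter.Tendsto JJ Filter.atTop Filter.atTop :=
  Filter.tendsto_atTop_atTop.mpr (fun j => ⟨TT j, fun _ hm => JJ_ge hm⟩)

lemma anni {j d : ℕ} (hd1 : (j+1) * kk j ≤ d) (hd2 : d < (j+2) * kk j) :
    JJ (TT j + d) = j ∧ PP (TT j + d) = j + 1 := by
  have hJ := JJ_eq hd2
  have hPQ := PP_QQ_eq hd2
  have hK := kk_pos j
  have hdiv : d / kk j = j+1 := by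
    have h2 : d / kk j < j + 2 := (Nat.div_lt_iff_lt_mul hK).mpr hd2
    have h3 : j + 1 ≤ d / kk j := (Nat.le_div_iff_mul_le hK).mpr hd1
    omega
  exact ⟨hJ, by rw [hPQ.1, hdiv]⟩

lemma cc_anni {t : ℝ} (h0 : 0 < t) {j d : ℕ} (hd1 : (j+1) * kk j ≤ d)
    (hd2 : d < (j+2) * kk j) : cc t (TT j + d) = 1/(j+1) := by
  obtain ⟨hJ, hP⟩ := anni hd1 hd2
  rw [cc, hJ, hP, if_neg (by omega), one_mul, t_cancel h0]

lemma anni_start (j : ℕ) : JJ (TT j + (j+1) * kk j) = j ∧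
    PP (TT j + (j+1) * kk j) = j + 1 ∧ QQ (TT j + (j+1) * kk j) = 0 := by
  have hK := kk_pos j
  have hd2 : (j+1) * kk j < (j+2) * kk j := by
    have : (j+1) * kk j + kk j = (j+2) * kk j := by ring
    omega
  have hPQ := PP_QQ_eq hd2
  exact ⟨JJ_eq hd2, by rw [hPQ.1, Nat.mul_div_cancel _ hK],
    by rw [hPQ.2, Nat.mul_mod_left]⟩

lemma blk_lt_of_lt {i J : ℕ} (h : i < OO J) : blk i < J := by
  have h2 := blk_le i
  exact OO_strictMono.lt_iff_lt.mp (by omega)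

lemma blk_eq_of_mem {i j : ℕ} (h1 : OO j ≤ i) (h2 : i < OO (j+1)) : blk i = j := by
  have h3 := blk_eq (j := j) (q := i - OO j) (by rw [OO_succ] at h2; omega)
  rwa [show OO j + (i - OO j) = i from by omega] at h3

lemma sum_aa_sq {t : ℝ} (J : ℕ) :
    ∑ i ∈ Finset.range (OO J), (sv t (blk i))^2 = ∑ j ∈ Finset.range J, (t^2)^(j+1) := by
  induction J with
  | zero => simp [OO_zero]
  | succ J ih =>
    have hsplit : ∑ i ∈ Finset.range (OO (J+1)), (sv t (blk i))^2
        = ∑ i ∈ Finset.range (OO J), (sv t (blk i))^2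
          + ∑ i ∈ Finset.Ico (OO J) (OO (J+1)), (sv t (blk i))^2 := by
      rw [Finset.range_eq_Ico,
        ← Finset.sum_Ico_consecutive _ (Nat.zero_le (OO J))
          (OO_strictMono.monotone (Nat.le_succ J)), ← Finset.range_eq_Ico]
    rw [Finset.sum_range_succ, ← ih, hsplit]
    congr 1
    have hcongr : ∀ i ∈ Finset.Ico (OO J) (OO (J+1)), (sv t (blk i))^2 = (sv t J)^2 := by
      intro i hi
      rw [Finset.mem_Ico] at hi
      rw [blk_eq_of_mem hi.1 hi.2]
    rw [Finset.sum_congr rfl hcongr, Finset.sum_const, Nat.card_Ico, OO_succ,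
      Nat.add_sub_cancel_left, nsmul_eq_mul, sv, kk]
    have hj : ((J:ℝ)+1) ≠ 0 := by positivity
    push_cast
    field_simp
    ring

lemma sum_aa_sq_le {t : ℝ} (h0 : 0 < t) (h1 : t < 1) (s : Finset ℕ) :
    ∑ i ∈ s, (sv t (blk i))^2 ≤ (1-t^2)⁻¹ := by
  obtain ⟨n, hn⟩ := s.exists_nat_subset_range
  have hsub : s ⊆ Finset.range (OO n) := by
    refine hn.trans (Finset.range_subset_range.mpr OO_strictMono.le_apply)
  have hmono : ∑ i ∈ s, (sv t (blk i))^2 ≤ ∑ i ∈ Finset.range (OO n), (sv t (blk i))^2 :=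
    Finset.sum_le_sum_of_subset_of_nonneg hsub (fun i _ _ => by positivity)
  rw [sum_aa_sq] at hmono
  have hr0 : (0:ℝ) ≤ t^2 := by positivity
  have hr1 : t^2 < 1 := by nlinarith
  have hgeom : ∑ j ∈ Finset.range n, (t^2)^(j+1) ≤ (1-t^2)⁻¹ := by
    have he : ∑ j ∈ Finset.range n, (t^2)^(j+1) = (∑ j ∈ Finset.range n, (t^2)^j) * t^2 := by
      rw [Finset.sum_mul]
      exact Finset.sum_congr rfl (fun j _ => by rw [← pow_succ])
    have hg : ∑ j ∈ Finset.range n, (t^2)^j = (1-(t^2)^n)/(1-t^2) := by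
      rw [geom_sum_eq (ne_of_lt hr1)]
      rw [div_eq_div_iff (by linarith) (by linarith)]
      ring
    have hp0 : (0:ℝ) ≤ (t^2)^n := by positivity
    rw [he, hg]
    calc (1-(t^2)^n)/(1-t^2) * t^2 ≤ 1/(1-t^2) * 1 := by
          apply mul_le_mul _ (by nlinarith) hr0 (le_of_lt (div_pos one_pos (by linarith)))
          apply div_le_div₀ (by norm_num) (by linarith) (by linarith) le_rfl
    _ = (1-t^2)⁻¹ := by rw [mul_one, one_div]
  linarith

lemma sq_kk_cancel (j : ℕ) : (kk j : ℝ) * (1/((j:ℝ)+1))^2 = 1 := by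
  rw [kk]
  push_cast
  field_simp

lemma sum_xx_sq {t : ℝ} (h0 : 0 < t) (h1 : t < 1) (m : ℕ) :
    ∑ i ∈ Finset.range (OO (JJ m + 1)), (xx t m i)^2 ≤ 1 := by
  rw [Finset.range_eq_Ico,
    ← Finset.sum_Ico_consecutive _ (Nat.zero_le (OO (JJ m)))
      (OO_strictMono.monotone (Nat.le_succ (JJ m)))]
  have hzero : ∑ i ∈ Finset.Ico 0 (OO (JJ m)), (xx t m i)^2 = 0 := by
    apply Finset.sum_eq_zero
    intro i hi
    rw [Finset.mem_Ico] at hi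
    have hb : blk i < JJ m := blk_lt_of_lt hi.2
    rw [xx_of_dead t (le_trans (TT_strictMono.monotone (by omega)) (JJ_le m))]
    ring
  have hbnd : ∑ i ∈ Finset.Ico (OO (JJ m)) (OO (JJ m + 1)), (xx t m i)^2
      ≤ (kk (JJ m)) • ((1/((JJ m:ℝ)+1))^2) := by
    apply le_trans (Finset.sum_le_card_nsmul _ _ _ ?_)
    · rw [Nat.card_Ico, OO_succ, Nat.add_sub_cancel_left]
    · intro i hi
      rw [Finset.mem_Ico] at hi
      have hb : blk i = JJ m := blk_eq_of_mem hi.1 hi.2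
      have habs : |xx t m i| ≤ 1/((JJ m:ℝ)+1) := by
        rw [xx_of_active t (by rw [hb]; exact JJ_le m) (by rw [hb]; exact JJ_lt m), hb]
        exact vv_abs_one h0 h1 _ _
      calc (xx t m i)^2 = |xx t m i|^2 := (sq_abs _).symm
      _ ≤ (1/((JJ m:ℝ)+1))^2 := by
          apply pow_le_pow_left₀ (abs_nonneg _) habs
  rw [hzero, zero_add]
  refine hbnd.trans ?_
  rw [nsmul_eq_mul, sq_kk_cancel]

lemma sum_xx_anni {t : ℝ} (h0 : 0 < t) (j : ℕ) :
    ∑ i ∈ Finset.Ico (OO j) (OO (j+1)), (xx t (TT j + (j+1) * kk j) i)^2 = 1 := by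
  obtain ⟨hJ, hP, hQ⟩ := anni_start j
  have hK := kk_pos j
  have hd2 : (j+1) * kk j < (j+2) * kk j := by
    have : (j+1) * kk j + kk j = (j+2) * kk j := by ring
    omega
  have hcongr : ∀ i ∈ Finset.Ico (OO j) (OO (j+1)),
      (xx t (TT j + (j+1) * kk j) i)^2 = (1/((j:ℝ)+1))^2 := by
    intro i hi
    rw [Finset.mem_Ico] at hi
    have hb : blk i = j := blk_eq_of_mem hi.1 hi.2
    rw [xx_of_active t (by rw [hb]; exact Nat.le_add_right _ _)
        (by rw [hb, TT_succ]; omega), hb,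
      hP, hQ, if_neg (by omega), add_zero, vv_live t (le_refl (j+1)), t_cancel h0]
    rw [mul_pow, show ((-1:ℝ)^(j+1))^2 = 1 from by
      rw [← pow_mul, mul_comm, pow_mul, neg_one_sq, one_pow]]
    rw [one_mul]
  rw [Finset.sum_congr rfl hcongr, Finset.sum_const, Nat.card_Ico, OO_succ,
    Nat.add_sub_cancel_left, nsmul_eq_mul, sq_kk_cancel]

end S9

open RealInnerProductSpace Filter

theorem stmt_9 (H : Type*) [NormedAddCommGroup H] [InnerProductSpace ℝ H]
    (e : HilbertBasis ℕ ℝ H)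
    (D : Set H) (hD : D = Set.range (e : ℕ → H) ∪ Set.range (fun i => -(e i)))
    (t : ℝ) (ht : t ∈ Set.Ioo (0 : ℝ) 1) :
    ∃ (f : H) (c : ℕ → ℝ) (φ F : ℕ → H),
      (∀ n, 0 < c n) ∧
      Tendsto c atTop (nhds 0) ∧
      Tendsto (fun n => ∑ p ∈ Finset.range n, c p) atTop atTop ∧
      (∀ m, φ m ∈ D) ∧
      F 0 = f ∧
      (∀ m, t * sSup ((fun g => ⟪F m, g⟫) '' D) ≤ ⟪F m, φ m⟫) ∧
      (∀ m, F (m + 1) = F m - c m • φ m) ∧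
      1 ≤ limsup (fun n => ‖F n‖) atTop := by
  classical
  obtain ⟨h0, h1⟩ := ht
  -- the ℓ² element of coefficients
  have haa : Memℓp (fun i => S9.sv t (S9.blk i)) 2 := by
    apply memℓp_gen' (C := (1-t^2)⁻¹)
    intro s
    have hco : ∀ i : ℕ, ‖S9.sv t (S9.blk i)‖ ^ (2:ENNReal).toReal = (S9.sv t (S9.blk i))^2 := by
      intro i
      rw [show ((2:ENNReal)).toReal = ((2:ℕ):ℝ) from by simp, Real.rpow_natCast,
        Real.norm_eq_abs, sq_abs]
    calc ∑ i ∈ s, ‖S9.sv t (S9.blk i)‖ ^ (2:ENNReal).toReal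
        = ∑ i ∈ s, (S9.sv t (S9.blk i))^2 := Finset.sum_congr rfl (fun i _ => hco i)
    _ ≤ (1-t^2)⁻¹ := S9.sum_aa_sq_le h0 h1 s
  set A : lp (fun _ : ℕ => ℝ) 2 := ⟨fun i => S9.sv t (S9.blk i), haa⟩ with hA
  set f : H := e.repr.symm A with hf
  set φ : ℕ → H := fun m => if Even (S9.PP m) then e (S9.OO (S9.JJ m) + S9.QQ m)
    else -e (S9.OO (S9.JJ m) + S9.QQ m) with hφ
  set F : ℕ → H := fun m => f - ∑ p ∈ Finset.range m, S9.cc t p • φ p with hF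
  have hφs : ∀ m, φ m = ((-1:ℝ)^(S9.PP m)) • e (S9.OO (S9.JJ m) + S9.QQ m) := by
    intro m
    rw [hφ]
    rcases Nat.even_or_odd (S9.PP m) with hev | hod
    · simp only [if_pos hev, hev.neg_one_pow, one_smul]
    · simp only [if_neg (Nat.not_even_iff_odd.mpr hod), hod.neg_one_pow, neg_one_smul]
  have horth := e.orthonormal
  have hfc : ∀ i, ⟪e i, f⟫ = S9.sv t (S9.blk i) := by
    intro i
    rw [← e.repr_apply_apply, hf, LinearIsometryEquiv.apply_symm_apply]
  have hee : ∀ i i' : ℕ, ⟪e i, e i'⟫ = if i = i' then (1:ℝ) else 0 :=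
    fun i i' => orthonormal_iff_ite.mp horth i i'
  -- coordinates of F
  have hFs : ∀ m, F (m+1) = F m - S9.cc t m • φ m := by
    intro m
    rw [hF]
    simp only
    rw [Finset.sum_range_succ]
    abel
  have hxF : ∀ m i, ⟪e i, F m⟫ = S9.xx t m i := by
    intro m
    induction m with
    | zero =>
      intro i
      rw [hF]
      simp only [Finset.range_zero, Finset.sum_empty, sub_zero]
      rw [hfc i, S9.xx_zero]
    | succ m ih =>
      intro i
      rw [hFs m, inner_sub_right, real_inner_smul_right, ih i, hφs m,
        real_inner_smul_right, hee i _, S9.xstep t m i]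
      by_cases h : i = S9.OO (S9.JJ m) + S9.QQ m
      · rw [if_pos h, if_pos h]
        ring
      · rw [if_neg h, if_neg h]
        ring
  have hFx : ∀ m i, ⟪F m, e i⟫ = S9.xx t m i := fun m i => by
    rw [real_inner_comm]; exact hxF m i
  -- zero-coordinate extensionality
  have ext0 : ∀ u : H, (∀ i, ⟪e i, u⟫ = 0) → u = 0 := by
    intro u hu
    have h2 : e.repr u = 0 := by
      apply lp.ext
      funext i
      rw [e.repr_apply_apply]
      simpa using hu i
    have := congrArg e.repr.symm h2
    rwa [LinearIsometryEquiv.symm_apply_apply, map_zero] at this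
  -- norm bound
  have hCb : ∀ m, ‖F m‖ ≤ ‖f‖ + Real.sqrt (2*‖f‖^2 + 2) := by
    intro m
    set N := S9.OO (S9.JJ m + 1) with hN
    set w : ℕ → ℝ := fun i => S9.sv t (S9.blk i) - S9.xx t m i with hw
    have hGeq : f - F m = ∑ i ∈ Finset.range N, w i • e i := by
      have hco : ∀ i', ⟪e i', (f - F m) - ∑ i ∈ Finset.range N, w i • e i⟫ = 0 := by
        intro i'
        rw [inner_sub_right, inner_sub_right, inner_sum]
        have hterm : ∀ i ∈ Finset.range N, ⟪e i', w i • e i⟫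
            = if i' = i then w i else 0 := by
          intro i _
          rw [real_inner_smul_right, hee i' i]
          split_ifs <;> ring
        rw [Finset.sum_congr rfl hterm, Finset.sum_ite_eq, hfc, hxF]
        by_cases hmem : i' ∈ Finset.range N
        · rw [if_pos hmem, hw]
          ring
        · rw [if_neg hmem]
          have hge : N ≤ i' := by
            rw [Finset.mem_range] at hmem
            omega
          have hblk : S9.JJ m + 1 ≤ S9.blk i' := S9.blk_ge hge
          have hfresh : m < S9.TT (S9.blk i') :=
            lt_of_lt_of_le (S9.JJ_lt m) (S9.TT_strictMono.monotone hblk)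
          rw [S9.xx_of_fresh t hfresh]
          ring
      have := ext0 _ hco
      have h2 : f - F m - ∑ i ∈ Finset.range N, w i • e i = 0 := this
      linear_combination (norm := abel) h2
    have hnormsq : ‖f - F m‖^2 = ∑ i ∈ Finset.range N, (w i)^2 := by
      rw [← real_inner_self_eq_norm_sq, hGeq, horth.inner_sum w w]
      exact Finset.sum_congr rfl (fun i _ => by rw [starRingEnd_apply, star_trivial, sq])
    have hsum1 : ∑ i ∈ Finset.range N, (S9.sv t (S9.blk i))^2 ≤ ‖f‖^2 := by
      have hb := horth.sum_inner_products_le (x := f) (s := Finset.range N)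
      have hco : ∀ i ∈ Finset.range N, ‖⟪e i, f⟫‖^2 = (S9.sv t (S9.blk i))^2 := by
        intro i _
        rw [hfc i, Real.norm_eq_abs, sq_abs]
      rwa [Finset.sum_congr rfl hco] at hb
    have hsum2 : ∑ i ∈ Finset.range N, (S9.xx t m i)^2 ≤ 1 := S9.sum_xx_sq h0 h1 m
    have hwsum : ∑ i ∈ Finset.range N, (w i)^2 ≤ 2*‖f‖^2 + 2 := by
      have hptw : ∀ i ∈ Finset.range N, (w i)^2
          ≤ 2*(S9.sv t (S9.blk i))^2 + 2*(S9.xx t m i)^2 := by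
        intro i _
        simp only [hw]
        nlinarith [sq_nonneg (S9.sv t (S9.blk i) + S9.xx t m i)]
      calc ∑ i ∈ Finset.range N, (w i)^2
          ≤ ∑ i ∈ Finset.range N, (2*(S9.sv t (S9.blk i))^2 + 2*(S9.xx t m i)^2) :=
            Finset.sum_le_sum hptw
      _ = 2 * (∑ i ∈ Finset.range N, (S9.sv t (S9.blk i))^2)
            + 2 * (∑ i ∈ Finset.range N, (S9.xx t m i)^2) := by
          rw [Finset.sum_add_distrib, Finset.mul_sum, Finset.mul_sum]
      _ ≤ 2*‖f‖^2 + 2 := by linarith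
    have hdn : ‖f - F m‖ ≤ Real.sqrt (2*‖f‖^2 + 2) := by
      have h2 : ‖f - F m‖^2 ≤ 2*‖f‖^2 + 2 := by rw [hnormsq]; exact hwsum
      have h3 := Real.sqrt_le_sqrt h2
      rwa [Real.sqrt_sq (norm_nonneg _)] at h3
    calc ‖F m‖ = ‖f - (f - F m)‖ := by rw [sub_sub_cancel]
    _ ≤ ‖f‖ + ‖f - F m‖ := norm_sub_le _ _
    _ ≤ ‖f‖ + Real.sqrt (2*‖f‖^2 + 2) := by linarith
  refine ⟨f, S9.cc t, φ, F, fun n => S9.cc_pos h0 n, ?_, ?_, ?_, ?_, ?_, ?_, ?_⟩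
  · -- c → 0
    apply squeeze_zero (fun n => (S9.cc_pos h0 n).le) (fun n => S9.cc_le h0 h1 n)
    have hbase : Tendsto (fun j : ℕ => 2/((j:ℝ)+1)) atTop (nhds 0) := by
      have h2 := tendsto_one_div_add_atTop_nhds_zero_nat.const_mul (2:ℝ)
      rw [mul_zero] at h2
      simpa [div_eq_mul_inv] using h2
    exact hbase.comp S9.JJ_tendsto
  · -- divergence
    rw [tendsto_atTop]
    intro b
    obtain ⟨j, hj⟩ := exists_nat_ge b
    have hK := S9.kk_pos j
    have hsum : ∑ p ∈ Finset.Ico (S9.TT j + (j+1) * S9.kk j) (S9.TT j + (j+2) * S9.kk j),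
        S9.cc t p = (j:ℝ) + 1 := by
      have hco : ∀ p ∈ Finset.Ico (S9.TT j + (j+1) * S9.kk j) (S9.TT j + (j+2) * S9.kk j),
          S9.cc t p = 1/((j:ℝ)+1) := by
        intro p hp
        rw [Finset.mem_Ico] at hp
        rw [show p = S9.TT j + (p - S9.TT j) from by omega]
        have hmul : (j+1) * S9.kk j + S9.kk j = (j+2) * S9.kk j := by ring
        exact S9.cc_anni h0 (by omega) (by omega)
      rw [Finset.sum_congr rfl hco, Finset.sum_const, Nat.card_Ico]
      have hcard : S9.TT j + (j+2) * S9.kk j - (S9.TT j + (j+1) * S9.kk j) = S9.kk j := by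
        have hmul : (j+1) * S9.kk j + S9.kk j = (j+2) * S9.kk j := by ring
        omega
      rw [hcard, nsmul_eq_mul, S9.kk]
      push_cast
      field_simp
    have hkey : (j:ℝ) + 1 ≤ ∑ p ∈ Finset.range (S9.TT (j+1)), S9.cc t p := by
      rw [← hsum]
      apply Finset.sum_le_sum_of_subset_of_nonneg
      · rw [Finset.range_eq_Ico]
        apply Finset.Ico_subset_Ico (Nat.zero_le _)
        rw [S9.TT_succ]
      · intro p _ _
        exact (S9.cc_pos h0 p).le
    have hmono : Monotone (fun n => ∑ p ∈ Finset.range n, S9.cc t p) := by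
      apply monotone_nat_of_le_succ
      intro n
      rw [Finset.sum_range_succ]
      linarith [S9.cc_pos h0 n]
    filter_upwards [Filter.eventually_ge_atTop (S9.TT (j+1))] with n hn
    calc b ≤ (j:ℝ) + 1 := by linarith
    _ ≤ ∑ p ∈ Finset.range (S9.TT (j+1)), S9.cc t p := hkey
    _ ≤ ∑ p ∈ Finset.range n, S9.cc t p := hmono hn
  · -- φ ∈ D
    intro m
    rw [hD]
    simp only [hφ]
    split_ifs
    · exact Or.inl ⟨_, rfl⟩
    · exact Or.inr ⟨_, rfl⟩
  · -- F 0 = f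
    rw [hF]
    simp
  · -- greedy condition
    intro m
    have hPle : S9.PP m ≤ S9.JJ m + 1 := by have := S9.PP_lt m; omega
    have hval : ⟪F m, φ m⟫ = t^(S9.JJ m+1) * t⁻¹^(S9.PP m) / ((S9.JJ m:ℝ)+1) := by
      rw [hφs m, real_inner_smul_right, hFx m _, S9.xx_self, S9.vv_live t hPle,
        ← mul_assoc, ← mul_pow]
      norm_num
    have hsup : sSup ((fun g => ⟪F m, g⟫) '' D)
        ≤ t^(S9.JJ m+1) * t⁻¹^(S9.PP m+1) / ((S9.JJ m:ℝ)+1) := by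
      apply Real.sSup_le _ (by positivity)
      rintro y ⟨g, hg, rfl⟩
      rw [hD] at hg
      rcases hg with ⟨i, rfl⟩ | ⟨i, rfl⟩
      · calc ⟪F m, e i⟫ ≤ |S9.xx t m i| := by rw [hFx]; exact le_abs_self _
        _ ≤ _ := S9.xx_abs h0 h1 m i
      · simp only
        rw [inner_neg_right, hFx]
        calc -S9.xx t m i ≤ |S9.xx t m i| := neg_le_abs _
        _ ≤ _ := S9.xx_abs h0 h1 m i
    rw [hval]
    calc t * sSup ((fun g => ⟪F m, g⟫) '' D)
        ≤ t * (t^(S9.JJ m+1) * t⁻¹^(S9.PP m+1) / ((S9.JJ m:ℝ)+1)) :=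
          mul_le_mul_of_nonneg_left hsup h0.le
    _ = t^(S9.JJ m+1) * t⁻¹^(S9.PP m) / ((S9.JJ m:ℝ)+1) := by
        have ht0 : t ≠ 0 := ne_of_gt h0
        rw [pow_succ]
        field_simp
        ring
        rw [mul_inv_cancel₀ ht0, one_mul]
  · -- recursion
    exact hFs
  · -- limsup
    have hfreq : ∃ᶠ n in atTop, (1:ℝ) ≤ ‖F n‖ := by
      rw [Filter.frequently_atTop]
      intro N
      refine ⟨S9.TT N + (N+1) * S9.kk N, ?_, ?_⟩
      · have h2 : N ≤ S9.TT N := S9.TT_strictMono.le_apply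
        omega
      · set n := S9.TT N + (N+1) * S9.kk N with hn
        have hb := horth.sum_inner_products_le (x := F n)
          (s := Finset.Ico (S9.OO N) (S9.OO (N+1)))
        have hco : ∀ i ∈ Finset.Ico (S9.OO N) (S9.OO (N+1)),
            ‖⟪e i, F n⟫‖^2 = (S9.xx t n i)^2 := by
          intro i _
          rw [hxF n i, Real.norm_eq_abs, sq_abs]
        rw [Finset.sum_congr rfl hco, S9.sum_xx_anni h0 N] at hb
        nlinarith [norm_nonneg (F n)]
    have hbdd : IsBoundedUnder (· ≤ ·) atTop (fun n => ‖F n‖) :=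
      Filter.isBoundedUnder_of ⟨‖f‖ + Real.sqrt (2*‖f‖^2 + 2), fun n => hCb n⟩
    exact le_limsup_of_frequently_le hfreq hbdd
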